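/- Let $u, u_1, u_2, u_3, u_4$ be distinct complex numbers with $u_1 - u_2 + u_3 - u_4 = 0$, $X := -\frac{(u_2-u)(u_4-u)}{(u_1-u)(u_3-u)} > 0$, and suppose the central relation has a repeated root $\tilde{u} = u$. Then $u = \frac{u_1+u_3}{2} = \frac{u_2+u_4}{2}$, i.e., $u$ is the center of the parallelogram $u_1u_2u_3u_4$, and moreover $|u_1 - u_2| = |u_2 - u_3|$, i.e., the parallelogram is a rhombus. -/

import Mathlib

open Complex

/-- in the parallelogram case, if `X > 0` and the central relation has a
repeated root `ũ = u`, then `u` is the center of the parallelogram `u₁u₂u₃u₄` and the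
parallelogram is a rhombus. -/
theorem stmt7 (u u₁ u₂ u₃ u₄ : ℂ)
    (hdist : List.Pairwise (· ≠ ·) [u, u₁, u₂, u₃, u₄])
    (hden : (u₁ - u) * (u₃ - u) ≠ 0)
    (hpar : u₁ - u₂ + u₃ - u₄ = 0)
    (hX : ∃ x : ℝ, 0 < x ∧
      -((u₂ - u) * (u₄ - u)) / ((u₁ - u) * (u₃ - u)) = (x : ℂ))
    (hrep : (u₁ - u) + (u₂ - u) + (u₃ - u) + (u₄ - u) = 0) :
    u = (u₁ + u₃) / 2 ∧ u = (u₂ + u₄) / 2 ∧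
      ‖u₁ - u₂‖ = ‖u₂ - u₃‖ := by
  obtain ⟨x, hx, hXeq⟩ := hX
  have h13 : u₃ - u = -(u₁ - u) := by linear_combination (hpar + hrep) / 2
  have h24 : u₄ - u = -(u₂ - u) := by linear_combination (hrep - hpar) / 2
  refine ⟨by linear_combination -h13/2, by linear_combination -h24/2, ?_⟩
  rw [div_eq_iff hden] at hXeq
  -- hXeq : -((u₂ - u) * (u₄ - u)) = x * ((u₁ - u) * (u₃ - u))
  set s : ℝ := Real.sqrt x with hs
  have hs2 : (s : ℂ) ^ 2 = (x : ℂ) := by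
    norm_cast
    exact Real.sq_sqrt hx.le
  have hb2 : (u₂ - u) ^ 2 = -(x : ℂ) * (u₁ - u) ^ 2 := by
    linear_combination hXeq + (u₂ - u) * h24 + (x : ℂ) * (u₁ - u) * h13
  have hfac : ((u₂ - u) - I * (s : ℂ) * (u₁ - u)) * ((u₂ - u) + I * (s : ℂ) * (u₁ - u)) = 0 := by
    linear_combination hb2 + (u₁ - u) ^ 2 * hs2 - (s : ℂ) ^ 2 * (u₁ - u) ^ 2 * Complex.I_sq
  have e1 : u₁ - u₂ = (u₁ - u) - (u₂ - u) := by ring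
  have e2 : u₂ - u₃ = (u₂ - u) + (u₁ - u) := by linear_combination -h13
  rcases mul_eq_zero.mp hfac with hb | hb
  · have hb' : u₂ - u = I * (s : ℂ) * (u₁ - u) := by linear_combination hb
    rw [e1, e2, hb']
    have : (u₁ - u) - I * (s : ℂ) * (u₁ - u) = (1 - I * (s : ℂ)) * (u₁ - u) := by ring
    rw [this]
    have : I * (s : ℂ) * (u₁ - u) + (u₁ - u) = (1 + I * (s : ℂ)) * (u₁ - u) := by ring
    rw [this, norm_mul, norm_mul]
    congr 1
    rw [Complex.norm_def, Complex.norm_def]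
    congr 1
    simp [Complex.normSq_apply]
  · have hb' : u₂ - u = -(I * (s : ℂ) * (u₁ - u)) := by linear_combination hb
    rw [e1, e2, hb']
    have : (u₁ - u) - -(I * (s : ℂ) * (u₁ - u)) = (1 + I * (s : ℂ)) * (u₁ - u) := by ring
    rw [this]
    have : -(I * (s : ℂ) * (u₁ - u)) + (u₁ - u) = (1 - I * (s : ℂ)) * (u₁ - u) := by ring
    rw [this, norm_mul, norm_mul]
    congr 1
    rw [Complex.norm_def, Complex.norm_def]
    congr 1
    simp [Complex.normSq_apply]
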